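/- Second derivative and convexity of the overlap: for α ∈ (0,1), assuming the integrals below are finite, the function α ↦ U(α) is twice differentiable at α with U″(α) = 2 ∫_Ω p₀(w)p₁(w)(p₁(w) − p₀(w))²/(α p₀(w) + β p₁(w))³ dw ≥ 0, where β = 1−α; in particular U is convex on (0,1). -/

import Mathlib

open MeasureTheory Real Set

/-- The overlap integral `U(α) = ∫_Ω p₀ p₁ / (α p₀ + (1-α) p₁)`. -/
noncomputable def overlap (Ω : Set ℝ) (p₀ p₁ : ℝ → ℝ) (α : ℝ) : ℝ :=
  ∫ w in Ω, p₀ w * p₁ w / (α * p₀ w + (1 - α) * p₁ w)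

/-- The integral expression for the first derivative of the overlap. -/
noncomputable def overlapD1 (Ω : Set ℝ) (p₀ p₁ : ℝ → ℝ) (α : ℝ) : ℝ :=
  ∫ w in Ω, p₀ w * p₁ w * (p₁ w - p₀ w) / (α * p₀ w + (1 - α) * p₁ w) ^ 2

/-- The integral expression for the second derivative of the overlap. -/
noncomputable def overlapD2 (Ω : Set ℝ) (p₀ p₁ : ℝ → ℝ) (α : ℝ) : ℝ :=
  2 * ∫ w in Ω, p₀ w * p₁ w * (p₁ w - p₀ w) ^ 2 / (α * p₀ w + (1 - α) * p₁ w) ^ 3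

set_option maxHeartbeats 1000000 in
/-- Second derivative and convexity of the overlap: for `α ∈ (0,1)`, assuming the
relevant integrals are finite, `α ↦ U(α)` is twice differentiable at `α` with
`U''(α) = 2 ∫_Ω p₀ p₁ (p₁ - p₀)² / (α p₀ + (1-α) p₁)³ dw ≥ 0`; in particular `U` is
convex on `(0,1)`. -/
theorem overlap_second_derivative_convex
    (p₀ p₁ : ℝ → ℝ) (Ω : Set ℝ)
    (hm0 : Measurable p₀) (hm1 : Measurable p₁)
    (hpos0 : ∀ w, 0 ≤ p₀ w) (hpos1 : ∀ w, 0 ≤ p₁ w)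
    (hnorm0 : ∫ w, p₀ w = 1) (hnorm1 : ∫ w, p₁ w = 1)
    (hΩ0 : Ω = {w | 0 < p₀ w}) (hΩ1 : Ω = {w | 0 < p₁ w})
    (hUint : ∀ a ∈ Icc (0:ℝ) 1,
      IntegrableOn (fun w => p₀ w * p₁ w / (a * p₀ w + (1 - a) * p₁ w)) Ω)
    (hD1int : ∀ a ∈ Ioo (0:ℝ) 1, IntegrableOn
      (fun w => p₀ w * p₁ w * (p₁ w - p₀ w) / (a * p₀ w + (1 - a) * p₁ w) ^ 2) Ω)
    (hD2int : ∀ a ∈ Ioo (0:ℝ) 1, IntegrableOn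
      (fun w => p₀ w * p₁ w * (p₁ w - p₀ w) ^ 2 / (a * p₀ w + (1 - a) * p₁ w) ^ 3) Ω) :
    (∀ α ∈ Ioo (0:ℝ) 1,
      HasDerivAt (overlap Ω p₀ p₁) (overlapD1 Ω p₀ p₁ α) α ∧
      HasDerivAt (overlapD1 Ω p₀ p₁) (overlapD2 Ω p₀ p₁ α) α ∧
      0 ≤ overlapD2 Ω p₀ p₁ α) ∧
    ConvexOn ℝ (Ioo (0:ℝ) 1) (overlap Ω p₀ p₁) := by
  have hΩmeas : MeasurableSet Ω := by
    rw [hΩ0]; exact measurableSet_lt measurable_const hm0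
  set μ := volume.restrict Ω with hμ
  have key : ∀ α ∈ Ioo (0:ℝ) 1,
      HasDerivAt (overlap Ω p₀ p₁) (overlapD1 Ω p₀ p₁ α) α ∧
      HasDerivAt (overlapD1 Ω p₀ p₁) (overlapD2 Ω p₀ p₁ α) α := by
    rintro α ⟨hα0, hα1⟩
    set ε := min α (1 - α) / 2 with hε
    have hεpos : 0 < ε := by
      have h := lt_min hα0 (show (0:ℝ) < 1 - α by linarith)
      positivity
    have hεα : ε ≤ α / 2 := by
      have := min_le_left α (1 - α); rw [hε]; linarith
    have hεα' : ε ≤ (1 - α) / 2 := by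
      have := min_le_right α (1 - α); rw [hε]; linarith
    have hball : ∀ a ∈ Metric.ball α ε, α / 2 ≤ a ∧ 1 - a ≥ (1 - α) / 2 := by
      intro a ha
      rw [Metric.mem_ball, Real.dist_eq, abs_lt] at ha
      constructor <;> linarith [ha.1, ha.2]
    have hden_lb : ∀ a ∈ Metric.ball α ε, ∀ w,
        (α * p₀ w + (1 - α) * p₁ w) / 2 ≤ a * p₀ w + (1 - a) * p₁ w := by
      intro a ha w
      obtain ⟨h1, h2⟩ := hball a ha
      nlinarith [hpos0 w, hpos1 w]
    have hden_posΩ : ∀ w ∈ Ω, ∀ a ∈ Metric.ball α ε,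
        0 < a * p₀ w + (1 - a) * p₁ w := by
      intro w hw a ha
      obtain ⟨h1, h2⟩ := hball a ha
      have hp0 : 0 < p₀ w := by rw [hΩ0] at hw; exact hw
      have hp1 : 0 < p₁ w := by rw [hΩ1] at hw; exact hw
      nlinarith
    constructor
    · -- first derivative
      have h := hasDerivAt_integral_of_dominated_loc_of_deriv_le (μ := μ) (x₀ := α)
        (F := fun a w => p₀ w * p₁ w / (a * p₀ w + (1 - a) * p₁ w))
        (F' := fun a w => p₀ w * p₁ w * (p₁ w - p₀ w) / (a * p₀ w + (1 - a) * p₁ w) ^ 2)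
        (bound := fun w =>
          4 * |p₀ w * p₁ w * (p₁ w - p₀ w) / (α * p₀ w + (1 - α) * p₁ w) ^ 2|)
        (Metric.ball_mem_nhds α hεpos) ?_ ?_ ?_ ?_ ?_ ?_
      · exact h.2
      · exact Filter.Eventually.of_forall fun a =>
          ((hm0.mul hm1).div
            ((measurable_const.mul hm0).add (measurable_const.mul hm1))).aestronglyMeasurable
      · exact hUint α ⟨hα0.le, hα1.le⟩
      · exact (((hm0.mul hm1).mul (hm1.sub hm0)).div
          (((measurable_const.mul hm0).add (measurable_const.mul hm1)).pow
            measurable_const)).aestronglyMeasurable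
      · refine Filter.Eventually.of_forall fun w a ha => ?_
        have hlb := hden_lb a ha w
        rcases eq_or_ne (p₀ w * p₁ w) 0 with hz | hz
        · simp only [hz, zero_mul, zero_div, norm_zero]
          positivity
        · rcases mul_ne_zero_iff.1 hz with ⟨h0, h1⟩
          have hp0 : 0 < p₀ w := (hpos0 w).lt_of_ne (Ne.symm h0)
          have hp1 : 0 < p₁ w := (hpos1 w).lt_of_ne (Ne.symm h1)
          have hdα : 0 < α * p₀ w + (1 - α) * p₁ w := by nlinarith
          have hda : 0 < a * p₀ w + (1 - a) * p₁ w := by linarith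
          simp only [Real.norm_eq_abs, abs_div, abs_pow, abs_of_pos hda, abs_of_pos hdα]
          rw [← mul_div_assoc, div_le_div_iff₀ (by positivity) (by positivity)]
          nlinarith [abs_nonneg (p₀ w * p₁ w * (p₁ w - p₀ w)), sq_nonneg
            (α * p₀ w + (1 - α) * p₁ w), sq_nonneg (a * p₀ w + (1 - a) * p₁ w),
            mul_le_mul_of_nonneg_left
              (show (α * p₀ w + (1 - α) * p₁ w)^2 ≤ 4 * (a * p₀ w + (1 - a) * p₁ w)^2 by
                nlinarith)
              (abs_nonneg (p₀ w * p₁ w * (p₁ w - p₀ w)))]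
      · exact ((hD1int α ⟨hα0, hα1⟩).abs).const_mul 4
      · filter_upwards [ae_restrict_mem hΩmeas] with w hw a ha
        have hda := hden_posΩ w hw a ha
        have hd : HasDerivAt (fun a : ℝ => a * p₀ w + (1 - a) * p₁ w) (p₀ w - p₁ w) a := by
          have h1 : HasDerivAt (fun a : ℝ => a * p₀ w + (1 - a) * p₁ w)
              (1 * p₀ w + (0 - 1) * p₁ w) a :=
            ((hasDerivAt_id a).mul_const _).add
              (((hasDerivAt_const a (1:ℝ)).sub (hasDerivAt_id a)).mul_const _)
          convert h1 using 1; ring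
        have h2 := (hasDerivAt_const a (p₀ w * p₁ w)).div hd (ne_of_gt hda)
        convert h2 using 1
        · rfl
        · rfl
        field_simp
        ring
    · -- second derivative
      have h := hasDerivAt_integral_of_dominated_loc_of_deriv_le (μ := μ) (x₀ := α)
        (F := fun a w => p₀ w * p₁ w * (p₁ w - p₀ w) / (a * p₀ w + (1 - a) * p₁ w) ^ 2)
        (F' := fun a w =>
          2 * (p₀ w * p₁ w * (p₁ w - p₀ w) ^ 2 / (a * p₀ w + (1 - a) * p₁ w) ^ 3))
        (bound := fun w =>
          16 * |p₀ w * p₁ w * (p₁ w - p₀ w) ^ 2 / (α * p₀ w + (1 - α) * p₁ w) ^ 3|)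
        (Metric.ball_mem_nhds α hεpos) ?_ ?_ ?_ ?_ ?_ ?_
      · have heq : overlapD2 Ω p₀ p₁ α =
            ∫ w, 2 * (p₀ w * p₁ w * (p₁ w - p₀ w) ^ 2 /
              (α * p₀ w + (1 - α) * p₁ w) ^ 3) ∂μ := by
          rw [overlapD2, MeasureTheory.integral_const_mul]
        rw [heq]
        exact h.2
      · exact Filter.Eventually.of_forall fun a =>
          (((hm0.mul hm1).mul (hm1.sub hm0)).div
            (((measurable_const.mul hm0).add (measurable_const.mul hm1)).pow
              measurable_const)).aestronglyMeasurable
      · exact hD1int α ⟨hα0, hα1⟩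
      · exact (measurable_const.mul (((hm0.mul hm1).mul ((hm1.sub hm0).pow measurable_const)).div
          (((measurable_const.mul hm0).add (measurable_const.mul hm1)).pow
            measurable_const))).aestronglyMeasurable
      · refine Filter.Eventually.of_forall fun w a ha => ?_
        have hlb := hden_lb a ha w
        rcases eq_or_ne (p₀ w * p₁ w) 0 with hz | hz
        · simp only [hz, zero_mul, zero_div, mul_zero, norm_zero]
          positivity
        · rcases mul_ne_zero_iff.1 hz with ⟨h0, h1⟩
          have hp0 : 0 < p₀ w := (hpos0 w).lt_of_ne (Ne.symm h0)
          have hp1 : 0 < p₁ w := (hpos1 w).lt_of_ne (Ne.symm h1)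
          have hdα : 0 < α * p₀ w + (1 - α) * p₁ w := by nlinarith
          have hda : 0 < a * p₀ w + (1 - a) * p₁ w := by linarith
          have hN : 0 ≤ p₀ w * p₁ w * (p₁ w - p₀ w) ^ 2 :=
            mul_nonneg (mul_nonneg hp0.le hp1.le) (sq_nonneg _)
          simp only [Real.norm_eq_abs]
          beta_reduce
          rw [abs_of_nonneg (by positivity : (0:ℝ) ≤ 2 * (p₀ w * p₁ w * (p₁ w - p₀ w) ^ 2 /
              (a * p₀ w + (1 - a) * p₁ w) ^ 3)),
            abs_of_nonneg (by positivity : (0:ℝ) ≤ p₀ w * p₁ w * (p₁ w - p₀ w) ^ 2 /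
              (α * p₀ w + (1 - α) * p₁ w) ^ 3),
            ← mul_div_assoc, ← mul_div_assoc,
            div_le_div_iff₀ (by positivity) (by positivity)]
          have h8 : (α * p₀ w + (1 - α) * p₁ w) ^ 3 ≤
              8 * (a * p₀ w + (1 - a) * p₁ w) ^ 3 := by
            nlinarith [pow_le_pow_left₀ hdα.le
              (show α * p₀ w + (1 - α) * p₁ w ≤ 2 * (a * p₀ w + (1 - a) * p₁ w) by linarith) 3]
          nlinarith [mul_le_mul_of_nonneg_left h8 hN]
      · exact ((hD2int α ⟨hα0, hα1⟩).abs).const_mul 16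
      · filter_upwards [ae_restrict_mem hΩmeas] with w hw a ha
        have hda := hden_posΩ w hw a ha
        have hne := ne_of_gt hda
        have hd : HasDerivAt (fun a : ℝ => a * p₀ w + (1 - a) * p₁ w) (p₀ w - p₁ w) a := by
          have h1 : HasDerivAt (fun a : ℝ => a * p₀ w + (1 - a) * p₁ w)
              (1 * p₀ w + (0 - 1) * p₁ w) a :=
            ((hasDerivAt_id a).mul_const _).add
              (((hasDerivAt_const a (1:ℝ)).sub (hasDerivAt_id a)).mul_const _)
          convert h1 using 1; ring
        have h2 := (hasDerivAt_const a (p₀ w * p₁ w * (p₁ w - p₀ w))).div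
          (hd.pow 2) (pow_ne_zero 2 hne)
        convert h2 using 1
        · rfl
        · rfl
        simp only [Pi.pow_apply]
        rw [← mul_div_assoc, div_eq_div_iff (by positivity) (by positivity)]
        push_cast
        ring
  have hnn : ∀ α ∈ Ioo (0:ℝ) 1, 0 ≤ overlapD2 Ω p₀ p₁ α := by
    rintro α ⟨hα0, hα1⟩
    have h : 0 ≤ ∫ w in Ω, p₀ w * p₁ w * (p₁ w - p₀ w) ^ 2 /
        (α * p₀ w + (1 - α) * p₁ w) ^ 3 := by
      refine integral_nonneg fun w => div_nonneg
        (mul_nonneg (mul_nonneg (hpos0 w) (hpos1 w)) (sq_nonneg _))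
        (pow_nonneg (add_nonneg (mul_nonneg hα0.le (hpos0 w))
          (mul_nonneg (by linarith) (hpos1 w))) 3)
    rw [overlapD2]
    linarith
  refine ⟨fun α hα => ⟨(key α hα).1, (key α hα).2, hnn α hα⟩, ?_⟩
  refine convexOn_of_hasDerivWithinAt2_nonneg (f' := overlapD1 Ω p₀ p₁)
    (f'' := overlapD2 Ω p₀ p₁) (convex_Ioo 0 1) ?_ ?_ ?_ ?_
  · exact fun x hx => ((key x hx).1.differentiableAt.continuousAt).continuousWithinAt
  · intro x hx
    rw [isOpen_Ioo.interior_eq] at hx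
    exact ((key x hx).1).hasDerivWithinAt
  · intro x hx
    rw [isOpen_Ioo.interior_eq] at hx
    exact ((key x hx).2).hasDerivWithinAt
  · intro x hx
    rw [isOpen_Ioo.interior_eq] at hx
    exact hnn x hx
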